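/- Let L be an n×n Laplacian matrix (symmetric, zero row and column sums, nonnegative off-diagonals). Define x_∞(i) = max_{j≠i} L_{ij} and L̂ = L − x_∞ ⊗ 𝟙. Then the operator norms satisfy ‖L̂‖_{ℓ¹→ℓ¹} ≤ n·max_{i≠j} L_{ij} and ‖L̂‖_{ℓ^∞→ℓ^∞} ≤ n·max_{i≠j} L_{ij}. -/

import Mathlib

open Finset

/-- For an `n×n` Laplacian matrix `L`, setting `x_∞(i) = max_{j≠i} L_{ij}` and
`L̂ = L − x_∞ ⊗ 𝟙`, one has `‖L̂‖_{ℓ¹→ℓ¹} ≤ n·max_{i≠j} L_{ij}` (column sums) and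
`‖L̂‖_{ℓ^∞→ℓ^∞} ≤ n·max_{i≠j} L_{ij}` (row sums). -/
theorem laplacian_hat_operator_norms {n : ℕ}
    (L : Matrix (Fin n) (Fin n) ℝ)
    (hL_symm : ∀ i j, L i j = L j i)
    (hL_rows : ∀ i, ∑ j, L i j = 0)
    (hL_offdiag : ∀ i j, i ≠ j → 0 ≤ L i j) :
    (∀ j, ∑ i, |L i j - sSup {c : ℝ | ∃ l, l ≠ i ∧ c = L i l}| ≤
        n * sSup {c : ℝ | ∃ i j, i ≠ j ∧ c = L i j}) ∧
    (∀ i, ∑ j, |L i j - sSup {c : ℝ | ∃ l, l ≠ i ∧ c = L i l}| ≤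
        n * sSup {c : ℝ | ∃ i j, i ≠ j ∧ c = L i j}) := by
  rcases lt_or_ge n 2 with hn | hn
  · interval_cases n
    · exact ⟨fun j => j.elim0, fun i => i.elim0⟩
    · have hS : ∀ i : Fin 1, {c : ℝ | ∃ l, l ≠ i ∧ c = L i l} = ∅ := by
        intro i; ext c
        simp only [Set.mem_setOf_eq, Set.mem_empty_iff_false, iff_false, not_exists]
        rintro l ⟨hl, -⟩; exact hl (Subsingleton.elim l i)
      have hB : {c : ℝ | ∃ i j : Fin 1, i ≠ j ∧ c = L i j} = ∅ := by
        ext c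
        simp only [Set.mem_setOf_eq, Set.mem_empty_iff_false, iff_false, not_exists]
        rintro i j ⟨hij, -⟩; exact hij (Subsingleton.elim i j)
      have h00 : L 0 0 = 0 := by simpa using hL_rows 0
      constructor <;> intro j <;>
        simp [Fin.sum_univ_one, hS, hB, Real.sSup_empty,
          Subsingleton.elim j (0 : Fin 1), h00]
  · haveI : Nontrivial (Fin n) := Fin.nontrivial_iff_two_le.mpr hn
    set M := sSup {c : ℝ | ∃ i j : Fin n, i ≠ j ∧ c = L i j} with hMdef
    have hbigbdd : BddAbove {c : ℝ | ∃ i j : Fin n, i ≠ j ∧ c = L i j} := by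
      apply Set.Finite.bddAbove
      apply Set.Finite.subset (Set.finite_range fun p : Fin n × Fin n => L p.1 p.2)
      rintro c ⟨i, j, -, rfl⟩; exact ⟨(i, j), rfl⟩
    have hleM : ∀ i j : Fin n, i ≠ j → L i j ≤ M := fun i j hij =>
      le_csSup hbigbdd ⟨i, j, hij, rfl⟩
    have hM0 : 0 ≤ M := by
      obtain ⟨i, j, hij⟩ := exists_pair_ne (Fin n)
      exact le_trans (hL_offdiag i j hij) (hleM i j hij)
    -- facts about x i := sSup {c | ∃ l ≠ i, c = L i l}
    have hx : ∀ i : Fin n,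
        (∀ l, l ≠ i → L i l ≤ sSup {c : ℝ | ∃ l, l ≠ i ∧ c = L i l}) ∧
        sSup {c : ℝ | ∃ l, l ≠ i ∧ c = L i l} ≤ M ∧
        0 ≤ sSup {c : ℝ | ∃ l, l ≠ i ∧ c = L i l} := by
      intro i
      have hfin : {c : ℝ | ∃ l, l ≠ i ∧ c = L i l}.Finite := by
        apply Set.Finite.subset (Set.finite_range (L i))
        rintro c ⟨l, -, rfl⟩; exact ⟨l, rfl⟩
      obtain ⟨l0, hl0⟩ := exists_ne i
      have hne : {c : ℝ | ∃ l, l ≠ i ∧ c = L i l}.Nonempty := ⟨L i l0, l0, hl0, rfl⟩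
      have h1 : ∀ l, l ≠ i → L i l ≤ sSup {c : ℝ | ∃ l, l ≠ i ∧ c = L i l} :=
        fun l hl => le_csSup hfin.bddAbove ⟨l, hl, rfl⟩
      refine ⟨h1, ?_, ?_⟩
      · exact csSup_le hne (by rintro c ⟨l, hl, rfl⟩; exact hleM i l (Ne.symm hl))
      · exact le_trans (hL_offdiag i l0 (Ne.symm hl0)) (h1 l0 hl0)
    have hdiag : ∀ i : Fin n, L i i ≤ 0 := by
      intro i
      have hsplit : L i i + ∑ l ∈ univ.erase i, L i l = ∑ j, L i j :=
        Finset.add_sum_erase _ _ (mem_univ i)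
      rw [hL_rows i] at hsplit
      have hpos : 0 ≤ ∑ l ∈ univ.erase i, L i l :=
        Finset.sum_nonneg fun l hl => hL_offdiag i l (Ne.symm (Finset.ne_of_mem_erase hl))
      linarith
    have habs : ∀ i j : Fin n,
        |L i j - sSup {c : ℝ | ∃ l, l ≠ i ∧ c = L i l}| =
          sSup {c : ℝ | ∃ l, l ≠ i ∧ c = L i l} - L i j := by
      intro i j
      have hle : L i j ≤ sSup {c : ℝ | ∃ l, l ≠ i ∧ c = L i l} := by
        rcases eq_or_ne j i with rfl | hj
        · exact le_trans (hdiag j) (hx j).2.2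
        · exact (hx i).1 j hj
      rw [abs_of_nonpos (sub_nonpos.mpr hle), neg_sub]
    constructor
    · intro j
      have hcol : ∑ i, L i j = 0 := by
        rw [Finset.sum_congr rfl fun i _ => hL_symm i j]
        exact hL_rows j
      calc ∑ i, |L i j - sSup {c : ℝ | ∃ l, l ≠ i ∧ c = L i l}|
          = ∑ i, (sSup {c : ℝ | ∃ l, l ≠ i ∧ c = L i l} - L i j) :=
            Finset.sum_congr rfl fun i _ => habs i j
        _ = (∑ i, sSup {c : ℝ | ∃ l, l ≠ i ∧ c = L i l}) - ∑ i, L i j :=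
            Finset.sum_sub_distrib _ _
        _ = ∑ i, sSup {c : ℝ | ∃ l, l ≠ i ∧ c = L i l} := by rw [hcol, sub_zero]
        _ ≤ ∑ _i : Fin n, M := Finset.sum_le_sum fun i _ => (hx i).2.1
        _ = n * M := by rw [Finset.sum_const, card_univ, Fintype.card_fin, nsmul_eq_mul]
    · intro i
      calc ∑ j, |L i j - sSup {c : ℝ | ∃ l, l ≠ i ∧ c = L i l}|
          = ∑ j, (sSup {c : ℝ | ∃ l, l ≠ i ∧ c = L i l} - L i j) :=
            Finset.sum_congr rfl fun j _ => habs i j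
        _ = (∑ _j : Fin n, sSup {c : ℝ | ∃ l, l ≠ i ∧ c = L i l}) - ∑ j, L i j :=
            Finset.sum_sub_distrib _ _
        _ = n * sSup {c : ℝ | ∃ l, l ≠ i ∧ c = L i l} := by
            rw [hL_rows i, sub_zero, Finset.sum_const, card_univ, Fintype.card_fin,
              nsmul_eq_mul]
        _ ≤ n * M := by
            exact mul_le_mul_of_nonneg_left (hx i).2.1 (by positivity)
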